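/- Let Q ≥ 1, let r_1, …, r_Q be pairwise distinct real numbers and α_1, …, α_Q strictly positive real numbers. With u_m = Σ_{q=1}^Q α_q r_q^m, M the (Q+1) × Q matrix M_{ij} = u_{i+j} (0 ≤ i ≤ Q, 0 ≤ j ≤ Q−1), M^i the Q × Q matrix obtained by deleting row i of M, and B(x) = Σ_{i=0}^{Q} (−1)^{i+Q} det(M^i) x^i, the polynomial B factorizes as B(x) = det(M^Q) · ∏_{q=1}^{Q} (x − r_q), where det(M^Q) > 0. -/

import Mathlib

open Finset Matrix

private lemma prod_Ioi_castSucc' {n : ℕ} (g : Fin (n+1) → ℝ) (i : Fin n) :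
    ∏ j ∈ Ioi i.castSucc, g j = (∏ j ∈ Ioi i, g j.castSucc) * g (Fin.last n) := by
  have h : Ioi i.castSucc = insert (Fin.last n) ((Ioi i).map Fin.castSuccEmb) := by
    ext j
    simp only [mem_Ioi, mem_insert, mem_map, Fin.castSuccEmb]
    constructor
    · intro hj
      rcases Fin.eq_castSucc_or_eq_last j with ⟨k, rfl⟩ | rfl
      · exact Or.inr ⟨k, by simpa using hj, rfl⟩
      · exact Or.inl rfl
    · rintro (rfl | ⟨k, hk, rfl⟩)
      · exact (Fin.castSucc_lt_last i)
      · exact Fin.castSucc_lt_castSucc_iff.mpr hk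
  rw [h, prod_insert (by simp only [mem_map, Fin.castSuccEmb, mem_Ioi]; rintro ⟨k, -, hk⟩; exact (Fin.castSucc_lt_last k).ne hk),
    prod_map, mul_comm]
  rfl

private lemma vandermonde_snoc_det {n : ℕ} (r : Fin n → ℝ) (x : ℝ) :
    (Matrix.vandermonde (Fin.snoc r x)).det =
      (Matrix.vandermonde r).det * ∏ q, (x - r q) := by
  rw [Matrix.det_vandermonde, Matrix.det_vandermonde, Fin.prod_univ_castSucc]
  have hlast : ∏ j ∈ Ioi (Fin.last n), ((Fin.snoc r x : Fin (n+1) → ℝ) j - (Fin.snoc r x : Fin (n+1) → ℝ) (Fin.last n)) = 1 :=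
    Finset.prod_eq_one fun j hj => absurd (mem_Ioi.mp hj) (Fin.le_last j).not_gt
  rw [hlast, mul_one, ← Finset.prod_mul_distrib]
  refine Finset.prod_congr rfl fun i _ => ?_
  rw [prod_Ioi_castSucc']
  simp [Fin.snoc_castSucc, Fin.snoc_last]

private lemma MQ_det {Q : ℕ} (r α : Fin Q → ℝ) :
    Matrix.det (Matrix.of fun a b : Fin Q => ∑ q, α q * r q ^ ((a : ℕ) + (b : ℕ))) =
      (∏ q, α q) * (Matrix.vandermonde r).det ^ 2 := by
  have h : (Matrix.of fun a b : Fin Q => ∑ q, α q * r q ^ ((a : ℕ) + (b : ℕ))) =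
      (Matrix.vandermonde r)ᵀ * (Matrix.diagonal α * Matrix.vandermonde r) := by
    ext a b
    rw [Matrix.of_apply, Matrix.mul_apply]
    simp only [Matrix.transpose_apply, Matrix.diagonal_mul, Matrix.vandermonde_apply]
    refine Finset.sum_congr rfl fun q _ => ?_
    rw [pow_add]; ring
  rw [h, Matrix.det_mul, Matrix.det_mul, Matrix.det_transpose, Matrix.det_diagonal]
  ring

theorem B_factorization
    (Q : ℕ) (hQ : 1 ≤ Q) (r α : Fin Q → ℝ)
    (hr : Function.Injective r) (hα : ∀ q, 0 < α q) :
    (∀ x : ℝ,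
      (∑ i : Fin (Q + 1),
        (-1 : ℝ) ^ ((i : ℕ) + Q) *
          Matrix.det (Matrix.of fun a b : Fin Q =>
            ∑ q, α q * r q ^ (((i.succAbove a : Fin (Q + 1)) : ℕ) + (b : ℕ))) *
          x ^ (i : ℕ)) =
      Matrix.det (Matrix.of fun a b : Fin Q =>
          ∑ q, α q * r q ^ ((a : ℕ) + (b : ℕ))) *
        ∏ q, (x - r q)) ∧
    0 < Matrix.det (Matrix.of fun a b : Fin Q =>
        ∑ q, α q * r q ^ ((a : ℕ) + (b : ℕ))) := by
  have hV : (Matrix.vandermonde r).det ≠ 0 := by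
    rw [Matrix.det_vandermonde_ne_zero_iff]
    exact hr
  constructor
  · intro x
    -- the big matrix N
    set N : Matrix (Fin (Q + 1)) (Fin (Q + 1)) ℝ := fun i j =>
      if h : (j : ℕ) < Q then ∑ q, α q * r q ^ ((i : ℕ) + (j : ℕ)) else x ^ (i : ℕ) with hN
    -- the weight matrix W
    set W : Matrix (Fin (Q + 1)) (Fin (Q + 1)) ℝ := fun k j =>
      if hk : (k : ℕ) < Q then
        (if (j : ℕ) < Q then α ⟨k, hk⟩ * r ⟨k, hk⟩ ^ (j : ℕ) else 0)
      else (if (j : ℕ) < Q then 0 else 1) with hW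
    -- step 1 : LHS = det N
    have step1 : (∑ i : Fin (Q + 1),
        (-1 : ℝ) ^ ((i : ℕ) + Q) *
          Matrix.det (Matrix.of fun a b : Fin Q =>
            ∑ q, α q * r q ^ (((i.succAbove a : Fin (Q + 1)) : ℕ) + (b : ℕ))) *
          x ^ (i : ℕ)) = N.det := by
      rw [Matrix.det_succ_column N (Fin.last Q)]
      refine Finset.sum_congr rfl fun i _ => ?_
      have h1 : N i (Fin.last Q) = x ^ (i : ℕ) := by
        simp [hN]
      have h2 : N.submatrix i.succAbove (Fin.last Q).succAbove =
          Matrix.of fun a b : Fin Q =>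
            ∑ q, α q * r q ^ (((i.succAbove a : Fin (Q + 1)) : ℕ) + (b : ℕ)) := by
        ext a b
        rw [Matrix.submatrix_apply]
        simp [hN, Fin.succAbove_last, b.isLt]
      rw [h1, h2, Fin.val_last]
      ring
    -- step 2 : N factors
    have step2 : N = (Matrix.vandermonde (Fin.snoc r x))ᵀ * W := by
      ext i j
      rw [Matrix.mul_apply, Fin.sum_univ_castSucc]
      simp only [Matrix.transpose_apply, Matrix.vandermonde_apply, hW,
        Fin.coe_castSucc, Fin.is_lt, dite_true, Fin.val_last, lt_irrefl, dite_false,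
        Fin.snoc_castSucc, Fin.snoc_last, Fin.eta]
      by_cases h : (j : ℕ) < Q
      · simp only [hN, h, if_true, dite_true, mul_zero, add_zero]
        refine Finset.sum_congr rfl fun q _ => ?_
        rw [pow_add]; ring
      · simp only [hN, h, if_false, dite_false, mul_one, mul_zero]
        simp
    -- det W
    have hdetW : W.det = (∏ q, α q) * (Matrix.vandermonde r).det := by
      rw [Matrix.det_succ_row W (Fin.last Q)]
      rw [Finset.sum_eq_single (Fin.last Q)]
      · have h1 : W (Fin.last Q) (Fin.last Q) = 1 := by simp [hW]
        have h2 : W.submatrix (Fin.last Q).succAbove (Fin.last Q).succAbove =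
            Matrix.diagonal α * Matrix.vandermonde r := by
          ext a b
          rw [Matrix.submatrix_apply]
          simp [hW, Fin.succAbove_last, a.isLt, b.isLt, Matrix.diagonal_mul,
            Matrix.vandermonde_apply]
        rw [h1, h2, Matrix.det_mul, Matrix.det_diagonal, Fin.val_last,
          ← two_mul, pow_mul]
        norm_num
      · intro j _ hj
        have : W (Fin.last Q) j = 0 := by
          have hjQ : (j : ℕ) < Q := by
            rcases Fin.eq_castSucc_or_eq_last j with ⟨k, rfl⟩ | rfl
            · exact k.isLt
            · exact absurd rfl hj
          simp [hW, hjQ]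
        rw [this]; ring
      · intro h; exact absurd (Finset.mem_univ _) h
    -- combine
    rw [step1, step2, Matrix.det_mul, Matrix.det_transpose, vandermonde_snoc_det,
      hdetW, MQ_det]
    ring
  · rw [MQ_det]
    have h1 : 0 < ∏ q, α q := Finset.prod_pos fun q _ => hα q
    have h2 : 0 < (Matrix.vandermonde r).det ^ 2 :=
      (sq_nonneg _).lt_of_ne' (by simpa using pow_ne_zero 2 hV)
    exact mul_pos h1 h2
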